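/- The reachability-equivalence converse fails: the CRNs {A→B, B→C, C→A} and {A→C, C→B, B→A} give rise to the same reachability relation between formal states, yet are not pathway decomposition equivalent (their formal bases differ). -/

import Mathlib

namespace CRNVerif

variable {σ : Type} [DecidableEq σ]

/-- A state is a multiset of species. -/
abbrev State (σ : Type) := Multiset σ
/-- A reaction is a pair (reactants, products) of multisets of species. -/
abbrev Reaction (σ : Type) := Multiset σ × Multiset σ
/-- A pathway is a finite sequence of reactions. -/
abbrev Pathway (σ : Type) := List (Reaction σ)

/-- Result of applying reaction `r` in state `S` (i.e. `S ⊕ r`). -/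
def applyRxn (S : State σ) (r : Reaction σ) : State σ := S - r.1 + r.2

/-- Minimal initial state of a pathway: the smallest state in which
its reactions can occur in succession. -/
def minInit : Pathway σ → State σ
  | [] => 0
  | r :: p => r.1 + (minInit p - r.2)

/-- State reached from `S` after performing all reactions of `p` in order. -/
def finalFrom (S : State σ) : Pathway σ → State σ
  | [] => S
  | r :: p => finalFrom (applyRxn S r) p

/-- The final state of a pathway (starting from its minimal initial state). -/
def finalState (p : Pathway σ) : State σ := finalFrom (minInit p) p

/-- The state `S_i` after the first `i` reactions, starting from the minimal initial state. -/
def stateAt (p : Pathway σ) (i : ℕ) : State σ := finalFrom (minInit p) (p.take i)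

/-- A state is formal if it contains only formal species (as given by `fm`). -/
def FormalState (fm : σ → Bool) (S : State σ) : Prop := ∀ x ∈ S, fm x = true

/-- `Formal(S)`: the multiset obtained by removing all intermediate species from `S`. -/
def formalPart (fm : σ → Bool) (S : State σ) : State σ := S.filter (fun x => fm x = true)

/-- A reaction is trivial if reactants equal products. -/
def TrivialRxn (r : Reaction σ) : Prop := r.1 = r.2

/-- A CRN is a (finite) set of nontrivial reactions. -/
def NontrivialRxns (C : Finset (Reaction σ)) : Prop := ∀ r ∈ C, ¬ TrivialRxn r

/-- A formal CRN contains only formal reactions. -/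
def IsFormalCRN (fm : σ → Bool) (C : Finset (Reaction σ)) : Prop :=
  ∀ r ∈ C, FormalState fm r.1 ∧ FormalState fm r.2

/-- `p` is a pathway of the CRN `C`. -/
def PathwayOf (C : Finset (Reaction σ)) (p : Pathway σ) : Prop := ∀ r ∈ p, r ∈ C

/-- `Interleave l₁ l₂ l`: `l` can be partitioned into the two (order-preserving,
not necessarily contiguous) subsequences `l₁` and `l₂`. -/
inductive Interleave {α : Type u} : List α → List α → List α → Prop
  | nil : Interleave [] [] []
  | left {a : α} {l₁ l₂ l : List α} : Interleave l₁ l₂ l → Interleave (a :: l₁) l₂ (a :: l)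
  | right {a : α} {l₁ l₂ l : List α} : Interleave l₁ l₂ l → Interleave l₁ (a :: l₂) (a :: l)

/-- `InterleaveMany qs p`: `p` is generated by interleaving the lists in `qs`. -/
inductive InterleaveMany {α : Type u} : List (List α) → List α → Prop
  | nil : InterleaveMany [] []
  | cons {q r p : List α} {qs : List (List α)} :
      Interleave q r p → InterleaveMany qs r → InterleaveMany (q :: qs) p

/-- A pathway is semiformal if its minimal initial state is formal. -/
def Semiformal (fm : σ → Bool) (p : Pathway σ) : Prop := FormalState fm (minInit p)

/-- A formal pathway: a (nonempty) pathway whose minimal initial state and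
final state are both formal. -/
def FormalPathway (fm : σ → Bool) (p : Pathway σ) : Prop :=
  p ≠ [] ∧ FormalState fm (minInit p) ∧ FormalState fm (finalState p)

/-- A formal pathway is decomposable if it can be partitioned into two nonempty
subsequences that are each formal pathways. -/
def FDecomposable (fm : σ → Bool) (p : Pathway σ) : Prop :=
  ∃ q₁ q₂, q₁ ≠ [] ∧ q₂ ≠ [] ∧ Interleave q₁ q₂ p ∧
    FormalPathway fm q₁ ∧ FormalPathway fm q₂

/-- A prime formal pathway is a formal pathway that is not decomposable. -/
def PrimePathway (fm : σ → Bool) (p : Pathway σ) : Prop :=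
  FormalPathway fm p ∧ ¬ FDecomposable fm p

/-- The formal basis: the set of (initial state, final state) pairs of prime
formal pathways of `C`. -/
def formalBasis (fm : σ → Bool) (C : Finset (Reaction σ)) : Set (Reaction σ) :=
  { r | ∃ p, PathwayOf C p ∧ PrimePathway fm p ∧ r = (minInit p, finalState p) }

/-- Two sets of reactions are equal up to addition/removal of trivial reactions. -/
def EqUpToTrivial (A B : Set (Reaction σ)) : Prop :=
  {r ∈ A | ¬ TrivialRxn r} = {r ∈ B | ¬ TrivialRxn r}

/-- The reaction at (0-based) index `j` of `p` is a turning point: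
before it only formal species of the initial state appear, from it on only formal
species of the final state appear, and at the moment the turning point fires,
no formal species are left over. -/
def TurningAt (fm : σ → Bool) (p : Pathway σ) (j : ℕ) : Prop :=
  ∃ h : j < p.length,
    (∀ i ≤ j, formalPart fm (stateAt p i) ≤ minInit p) ∧
    (∀ i, j < i → i ≤ p.length → formalPart fm (stateAt p i) ≤ finalState p) ∧
    formalPart fm (stateAt p j - (p.get ⟨j, h⟩).1) = 0

/-- A regular formal pathway: one that implements a formal reaction,
i.e. has a turning point. -/
def RegularPathway (fm : σ → Bool) (p : Pathway σ) : Prop :=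
  FormalPathway fm p ∧ ∃ j, TurningAt fm p j

/-- A CRN is regular if every prime formal pathway is regular. -/
def RegularCRN (fm : σ → Bool) (C : Finset (Reaction σ)) : Prop :=
  ∀ p, PathwayOf C p → PrimePathway fm p → RegularPathway fm p

/-- `q` is a strong closing pathway for `p` (within CRN `C`): it can occur in the
final state of `p`, consumes no formal species, and leads back to a formal state. -/
def ClosingPathway (fm : σ → Bool) (C : Finset (Reaction σ)) (p q : Pathway σ) : Prop :=
  PathwayOf C q ∧ minInit q ≤ finalState p ∧ (∀ r ∈ q, formalPart fm r.1 = 0) ∧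
  FormalState fm (finalFrom (finalState p) q)

/-- A CRN is strongly tidy if every semiformal pathway has a strong closing pathway. -/
def StronglyTidy (fm : σ → Bool) (C : Finset (Reaction σ)) : Prop :=
  ∀ p, PathwayOf C p → Semiformal fm p → ∃ q, ClosingPathway fm C p q

/-- A semiformal pathway is decomposable if it can be partitioned into two
nonempty subsequences that are each semiformal. -/
def SDecomposable (fm : σ → Bool) (p : Pathway σ) : Prop :=
  ∃ q₁ q₂, q₁ ≠ [] ∧ q₂ ≠ [] ∧ Interleave q₁ q₂ p ∧ Semiformal fm q₁ ∧ Semiformal fm q₂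

/-- The width of a pathway: the maximum size of the states it passes through. -/
def width (p : Pathway σ) : ℕ :=
  ((List.range (p.length + 1)).map (fun i => Multiset.card (stateAt p i))).foldr max 0

/-- The branching factor of a CRN. -/
def branching (C : Finset (Reaction σ)) : ℕ :=
  C.sup (fun r => max (Multiset.card r.1) (Multiset.card r.2))

/-- Formal state `T` is reachable from `S` via reactions of `C`. -/
def Reachable (C : Finset (Reaction σ)) (S T : State σ) : Prop :=
  ∃ p, PathwayOf C p ∧ minInit p ≤ S ∧ finalFrom S p = T

/-- `C` and `C'` share no intermediate species: any species occurring in both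
CRNs is formal. -/
def NoSharedIntermediates (fm : σ → Bool) (C C' : Finset (Reaction σ)) : Prop :=
  ∀ r ∈ C, ∀ r' ∈ C', ∀ x : σ, x ∈ r.1 + r.2 → x ∈ r'.1 + r'.2 → fm x = true

/-- The formal closure of a pathway: the minimal state containing the formal part
of every state along the pathway. -/
def formalClosure (fm : σ → Bool) (p : Pathway σ) : State σ :=
  ((List.range (p.length + 1)).map (fun i => formalPart fm (stateAt p i))).foldr (· ∪ ·) 0

/-- The decomposed final states of a semiformal pathway: all pairs of final
states arising from decompositions into two (nonempty) semiformal pathways. -/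
def DFS (fm : σ → Bool) (p : Pathway σ) : Set (State σ × State σ) :=
  { T | ∃ q₁ q₂, q₁ ≠ [] ∧ q₂ ≠ [] ∧ Interleave q₁ q₂ p ∧
        Semiformal fm q₁ ∧ Semiformal fm q₂ ∧ T = (finalState q₁, finalState q₂) }

/-- The minimal state containing the formal parts of all states strictly after index `j`. -/
def rfsAt (fm : σ → Bool) (p : Pathway σ) (j : ℕ) : State σ :=
  (((List.range (p.length + 1)).filter (fun i => j < i)).map
      (fun i => formalPart fm (stateAt p i))).foldr (· ∪ ·) 0

/-- The regular final states of a pathway: the minimal states `T` witnessed by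
potential turning point reactions. -/
def RFS (fm : σ → Bool) (p : Pathway σ) : Set (State σ) :=
  { T | ∃ j, ∃ h : j < p.length,
      (∀ i ≤ j, formalPart fm (stateAt p i) ≤ minInit p) ∧
      formalPart fm (stateAt p j - (p.get ⟨j, h⟩).1) = 0 ∧
      T = rfsAt fm p j }

/-- The signature of a semiformal pathway: (initial state, final state, width,
formal closure, DFS, RFS). -/
def signature (fm : σ → Bool) (p : Pathway σ) :
    State σ × State σ × ℕ × State σ × Set (State σ × State σ) × Set (State σ) :=
  (minInit p, finalState p, width p, formalClosure fm p, DFS fm p, RFS fm p)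

/-- An annotated prime pathway: exactly its chosen turning point is annotated,
with the corresponding formal basis reaction. -/
def GoodAnnotation (fm : σ → Bool) (ap : List (Reaction σ × Option (Reaction σ))) : Prop :=
  PrimePathway fm (ap.map Prod.fst) ∧
  ∃ j, TurningAt fm (ap.map Prod.fst) j ∧
    ap.map Prod.snd = (List.range ap.length).map
      (fun i => if i = j then
          some (minInit (ap.map Prod.fst), finalState (ap.map Prod.fst)) else none)

/-- `p` can be interpreted as `q`: `q` can occur in the initial state of `p`, has
the same net effect, and there is a decomposition of `p` into prime formal pathways
such that replacing a chosen turning point of each by the corresponding formal basis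
element and removing all other reactions yields `q`. -/
def Interpreted (fm : σ → Bool) (p q : Pathway σ) : Prop :=
  minInit q ≤ minInit p ∧
  finalFrom (minInit p) q = finalState p ∧
  ∃ ap : List (Reaction σ × Option (Reaction σ)),
    ap.map Prod.fst = p ∧ (ap.map Prod.snd).reduceOption = q ∧
    ∃ aps, InterleaveMany aps ap ∧ ∀ a ∈ aps, GoodAnnotation fm a


/-- The three species, all formal. -/
inductive Sp : Type
  | A | B | C
deriving DecidableEq

lemma minInit_cons_le_iff (S : State σ) (r : Reaction σ) (p : Pathway σ) :
    minInit (r :: p) ≤ S ↔ r.1 ≤ S ∧ minInit p ≤ applyRxn S r := by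
  constructor
  · intro h
    have h1 : r.1 ≤ S := le_trans le_self_add h
    have h2 : minInit p - r.2 ≤ S - r.1 := le_tsub_of_add_le_left h
    exact ⟨h1, le_trans le_tsub_add (add_le_add_left h2 r.2)⟩
  · rintro ⟨h1, h2⟩
    have h3 : minInit p - r.2 ≤ S - r.1 := by
      calc minInit p - r.2 ≤ (S - r.1 + r.2) - r.2 := tsub_le_tsub_right h2 _
        _ = S - r.1 := add_tsub_cancel_right _ _
    calc r.1 + (minInit p - r.2) ≤ r.1 + (S - r.1) := add_le_add_right h3 _
      _ = S := add_tsub_cancel_of_le h1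

lemma finalFrom_append (S : State σ) (p q : Pathway σ) :
    finalFrom S (p ++ q) = finalFrom (finalFrom S p) q := by
  induction p generalizing S with
  | nil => rfl
  | cons r p ih => simp [finalFrom, ih]

lemma minInit_append_le (S : State σ) (p q : Pathway σ)
    (hp : minInit p ≤ S) (hq : minInit q ≤ finalFrom S p) :
    minInit (p ++ q) ≤ S := by
  induction p generalizing S with
  | nil => exact hq
  | cons r p ih =>
    rw [List.cons_append, minInit_cons_le_iff]
    rw [minInit_cons_le_iff] at hp
    exact ⟨hp.1, ih _ hp.2 hq⟩

lemma translate (C D : Finset (Reaction σ))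
    (h : ∀ r ∈ C, ∀ S : State σ, r.1 ≤ S →
      ∃ q, PathwayOf D q ∧ minInit q ≤ S ∧ finalFrom S q = applyRxn S r) :
    ∀ p, PathwayOf C p → ∀ S, minInit p ≤ S →
      ∃ q, PathwayOf D q ∧ minInit q ≤ S ∧ finalFrom S q = finalFrom S p := by
  intro p
  induction p with
  | nil => exact fun _ S _ => ⟨[], fun r hr => absurd hr List.not_mem_nil, by
      simp [minInit], rfl⟩
  | cons r p ih =>
    intro hp S hS
    rw [minInit_cons_le_iff] at hS
    obtain ⟨q₁, hq₁D, hq₁le, hq₁f⟩ := h r (hp r List.mem_cons_self) S hS.1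
    obtain ⟨q₂, hq₂D, hq₂le, hq₂f⟩ :=
      ih (fun r' hr' => hp r' (List.mem_cons_of_mem _ hr')) (applyRxn S r) hS.2
    refine ⟨q₁ ++ q₂, ?_, ?_, ?_⟩
    · intro r' hr'
      rcases List.mem_append.mp hr' with h' | h'
      · exact hq₁D r' h'
      · exact hq₂D r' h'
    · exact minInit_append_le S q₁ q₂ hq₁le (hq₁f ▸ hq₂le)
    · rw [finalFrom_append, hq₁f, hq₂f]; rfl

lemma interleave_nil_left {α : Type u} (l : List α) : Interleave [] l l := by
  induction l with
  | nil => exact .nil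
  | cons a l ih => exact .right ih

lemma interleave_length {α : Type u} {l₁ l₂ l : List α}
    (h : Interleave l₁ l₂ l) : l₁.length + l₂.length = l.length := by
  induction h with
  | nil => rfl
  | left _ ih => simp only [List.length_cons]; omega
  | right _ ih => simp only [List.length_cons]; omega

lemma minInit_singleton (r : Reaction σ) : minInit [r] = r.1 := by
  simp [minInit, zero_tsub]

lemma finalState_singleton (r : Reaction σ) : finalState [r] = r.2 := by
  simp [finalState, minInit, finalFrom, applyRxn, zero_tsub]

lemma formalState_trivial (S : State σ) : FormalState (fun _ => true) S :=
  fun _ _ => rfl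

/-- With all species formal, the formal basis is the CRN itself. -/
lemma basis_all_formal (C : Finset (Reaction σ)) :
    formalBasis (fun _ => true) C = {r | r ∈ C} := by
  ext r
  constructor
  · rintro ⟨p, hpC, ⟨⟨hne, -, -⟩, hprime⟩, hr⟩
    match p, hne with
    | s :: p', _ =>
      match p' with
      | [] =>
        have : r = s := by
          rw [hr, minInit_singleton, finalState_singleton]
        rw [this]; exact hpC s List.mem_cons_self
      | t :: p'' =>
        exfalso
        exact hprime ⟨[s], t :: p'', List.cons_ne_nil _ _, List.cons_ne_nil _ _,
          .left (interleave_nil_left _),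
          ⟨List.cons_ne_nil _ _, formalState_trivial _, formalState_trivial _⟩,
          ⟨List.cons_ne_nil _ _, formalState_trivial _, formalState_trivial _⟩⟩
  · intro hrC
    refine ⟨[r], fun r' hr' => by rw [List.mem_singleton.mp hr']; exact hrC, ⟨⟨List.cons_ne_nil _ _,
      formalState_trivial _, formalState_trivial _⟩, ?_⟩, ?_⟩
    · rintro ⟨q₁, q₂, hq₁, hq₂, hint, -, -⟩
      have := interleave_length hint
      have l1 : 1 ≤ q₁.length := List.length_pos_iff.mpr hq₁
      have l2 : 1 ≤ q₂.length := List.length_pos_iff.mpr hq₂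
      simp at this; omega
    · rw [minInit_singleton, finalState_singleton]

lemma two_step (D : Finset (Reaction Sp)) (X Y Z : Sp)
    (h1 : ((({X} : Multiset Sp), ({Z} : Multiset Sp))) ∈ D)
    (h2 : ((({Z} : Multiset Sp), ({Y} : Multiset Sp))) ∈ D)
    (S : State Sp) (hS : ({X} : Multiset Sp) ≤ S) :
    ∃ q, PathwayOf D q ∧ minInit q ≤ S ∧
      finalFrom S q = applyRxn S ((({X} : Multiset Sp), ({Y} : Multiset Sp))) := by
  refine ⟨[(({X} : Multiset Sp), ({Z} : Multiset Sp)),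
           (({Z} : Multiset Sp), ({Y} : Multiset Sp))], ?_, ?_, ?_⟩
  · intro r hr
    rcases hr with _ | ⟨_, hr⟩
    · exact h1
    · rcases hr with _ | ⟨_, hr⟩
      · exact h2
      · exact absurd hr List.not_mem_nil
  · have : minInit [(({X} : Multiset Sp), ({Z} : Multiset Sp)),
        (({Z} : Multiset Sp), ({Y} : Multiset Sp))] = ({X} : Multiset Sp) := by
      simp [minInit, tsub_self]
    rw [this]; exact hS
  · simp [finalFrom, applyRxn, add_tsub_cancel_right]

abbrev D₁ : Finset (Reaction Sp) :=
  {(({Sp.A} : Multiset Sp), ({Sp.B} : Multiset Sp)),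
   (({Sp.B} : Multiset Sp), ({Sp.C} : Multiset Sp)),
   (({Sp.C} : Multiset Sp), ({Sp.A} : Multiset Sp))}

abbrev D₂ : Finset (Reaction Sp) :=
  {(({Sp.A} : Multiset Sp), ({Sp.C} : Multiset Sp)),
   (({Sp.C} : Multiset Sp), ({Sp.B} : Multiset Sp)),
   (({Sp.B} : Multiset Sp), ({Sp.A} : Multiset Sp))}

lemma step12 : ∀ r ∈ D₁, ∀ S : State Sp, r.1 ≤ S →
    ∃ q, PathwayOf D₂ q ∧ minInit q ≤ S ∧ finalFrom S q = applyRxn S r := by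
  intro r hr S hS
  simp only [D₁, Finset.mem_insert, Finset.mem_singleton] at hr
  rcases hr with rfl | rfl | rfl
  · exact two_step D₂ Sp.A Sp.B Sp.C (by decide) (by decide) S hS
  · exact two_step D₂ Sp.B Sp.C Sp.A (by decide) (by decide) S hS
  · exact two_step D₂ Sp.C Sp.A Sp.B (by decide) (by decide) S hS

lemma step21 : ∀ r ∈ D₂, ∀ S : State Sp, r.1 ≤ S →
    ∃ q, PathwayOf D₁ q ∧ minInit q ≤ S ∧ finalFrom S q = applyRxn S r := by
  intro r hr S hS
  simp only [D₂, Finset.mem_insert, Finset.mem_singleton] at hr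
  rcases hr with rfl | rfl | rfl
  · exact two_step D₁ Sp.A Sp.C Sp.B (by decide) (by decide) S hS
  · exact two_step D₁ Sp.C Sp.B Sp.A (by decide) (by decide) S hS
  · exact two_step D₁ Sp.B Sp.A Sp.C (by decide) (by decide) S hS

lemma reachable_mono {C D : Finset (Reaction Sp)}
    (h : ∀ r ∈ C, ∀ S : State Sp, r.1 ≤ S →
      ∃ q, PathwayOf D q ∧ minInit q ≤ S ∧ finalFrom S q = applyRxn S r)
    {S T : State Sp} (hR : Reachable C S T) : Reachable D S T := by
  obtain ⟨p, hp, hle, hf⟩ := hR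
  obtain ⟨q, hq, hqle, hqf⟩ := translate C D h p hp S hle
  exact ⟨q, hq, hqle, hqf.trans hf⟩

/-- The CRNs {A→B, B→C, C→A} and {A→C, C→B, B→A} have the same reachability
between formal states but are not pathway decomposition equivalent. -/
theorem reachability_equivalence_converse_fails :
    let fm : Sp → Bool := fun _ => true
    let C₁ : Finset (Reaction Sp) :=
      {(({Sp.A} : Multiset Sp), ({Sp.B} : Multiset Sp)),
       (({Sp.B} : Multiset Sp), ({Sp.C} : Multiset Sp)),
       (({Sp.C} : Multiset Sp), ({Sp.A} : Multiset Sp))}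
    let C₂ : Finset (Reaction Sp) :=
      {(({Sp.A} : Multiset Sp), ({Sp.C} : Multiset Sp)),
       (({Sp.C} : Multiset Sp), ({Sp.B} : Multiset Sp)),
       (({Sp.B} : Multiset Sp), ({Sp.A} : Multiset Sp))}
    (∀ S T : State Sp, FormalState fm S → FormalState fm T →
      (Reachable C₁ S T ↔ Reachable C₂ S T)) ∧
    ¬ EqUpToTrivial (formalBasis fm C₁) (formalBasis fm C₂) := by
  intro fm C₁ C₂
  constructor
  · intro S T _ _
    exact ⟨fun h => reachable_mono step12 h, fun h => reachable_mono step21 h⟩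
  · show ¬ EqUpToTrivial (formalBasis (fun _ => true) D₁) (formalBasis (fun _ => true) D₂)
    intro hEq
    have h1 : ((({Sp.A} : Multiset Sp), ({Sp.B} : Multiset Sp)))
        ∈ {r ∈ formalBasis (fun _ => true) D₁ | ¬ TrivialRxn r} := by
      refine ⟨?_, ?_⟩
      · rw [basis_all_formal]; simp only [Set.mem_setOf_eq]; decide
      · intro h
        exact (by decide : (({Sp.A} : Multiset Sp)) ≠ ({Sp.B} : Multiset Sp)) h
    rw [hEq] at h1
    obtain ⟨h2, -⟩ := h1
    rw [basis_all_formal] at h2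
    simp only [Set.mem_setOf_eq] at h2
    exact absurd h2 (by decide)

end CRNVerif
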